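/- The number of pairs (A, C) ∈ ℕ^{Φ⁺} × ℕ^{Φ⁺} together with λ ∈ Λ(n,d) satisfying χ(e_A f_C) ⪯ λ (componentwise) equals binom(n² + d - 1, d), the dimension of S(n,d). -/
import Mathlib

open scoped BigOperators

/-- the set of positive roots `Φ⁺` of `gl_n`, identified with pairs `(i,j)`, `i < j` -/
abbrev PhiPos (n : ℕ) : Type := {p : Fin n × Fin n // p.1 < p.2}

lemma card_funSum (α : Type*) [Fintype α] (d : ℕ) :
    Nat.card {f : α → ℕ // ∑ i, f i = d} = (Fintype.card α + d - 1).choose d := by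
  classical
  rw [Nat.card_congr (Sym.equivNatSumOfFintype α d).symm, Nat.card_eq_fintype_card,
    Sym.card_sym_eq_choose]

lemma card_phiPos (n : ℕ) : Fintype.card (PhiPos n) = ∑ i ∈ Finset.range n, i := by
  have e : PhiPos n ≃ Σ j : Fin n, Fin j.val :=
    { toFun := fun p => ⟨p.1.2, ⟨p.1.1, p.2⟩⟩
      invFun := fun x => ⟨(⟨x.2.1, x.2.2.trans x.1.2⟩, x.1), x.2.2⟩
      left_inv := fun p => rfl
      right_inv := fun x => rfl }
  rw [Fintype.card_congr e, Fintype.card_sigma]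
  simp only [Fintype.card_fin]
  rw [Fin.sum_univ_eq_sum_range (fun i => i)]

lemma arith (n : ℕ) : (∑ i ∈ Finset.range n, i) + (∑ i ∈ Finset.range n, i) + n = n ^ 2 := by
  have h := Finset.sum_range_id_mul_two n
  rcases n with _ | m
  · simp
  · simp only [Nat.succ_sub_one] at h
    nlinarith [h]

theorem count_basis_B1 (n d : ℕ) :
    Nat.card {t : ((PhiPos n → ℕ) × (PhiPos n → ℕ)) × (Fin n → ℕ) //
        (∑ k, t.2 k = d) ∧
        ∀ k : Fin n,
          (∑ p : PhiPos n, if p.1.2 = k then t.1.1 p + t.1.2 p else 0) ≤ t.2 k} =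
      Nat.choose (n ^ 2 + d - 1) d := by
  classical
  have key : ∀ (A C : PhiPos n → ℕ),
      (∑ k : Fin n, ∑ p : PhiPos n, if p.1.2 = k then A p + C p else 0)
        = ∑ p : PhiPos n, (A p + C p) := by
    intro A C
    rw [Finset.sum_comm]
    refine Finset.sum_congr rfl fun p _ => ?_
    simp
  have e : {t : ((PhiPos n → ℕ) × (PhiPos n → ℕ)) × (Fin n → ℕ) //
        (∑ k, t.2 k = d) ∧
        ∀ k : Fin n,
          (∑ p : PhiPos n, if p.1.2 = k then t.1.1 p + t.1.2 p else 0) ≤ t.2 k} ≃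
      {f : (PhiPos n ⊕ PhiPos n) ⊕ Fin n → ℕ // ∑ i, f i = d} := by
    refine
      { toFun := fun t => ⟨Sum.elim (Sum.elim t.1.1.1 t.1.1.2)
          (fun k => t.1.2 k - ∑ p : PhiPos n, if p.1.2 = k then t.1.1.1 p + t.1.1.2 p else 0), ?_⟩
        invFun := fun f => ⟨((fun p => f.1 (Sum.inl (Sum.inl p)), fun p => f.1 (Sum.inl (Sum.inr p))),
          fun k => (∑ p : PhiPos n, if p.1.2 = k then
            f.1 (Sum.inl (Sum.inl p)) + f.1 (Sum.inl (Sum.inr p)) else 0) + f.1 (Sum.inr k)), ?_, ?_⟩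
        left_inv := ?_
        right_inv := ?_ }
    · obtain ⟨⟨⟨A, C⟩, lam⟩, hsum, hle⟩ := t
      simp only [Fintype.sum_sum_type, Sum.elim_inl, Sum.elim_inr]
      have h1 : ∑ k : Fin n, (lam k - ∑ p : PhiPos n, if p.1.2 = k then A p + C p else 0)
          = (∑ k : Fin n, lam k) - ∑ k : Fin n, ∑ p : PhiPos n, if p.1.2 = k then A p + C p else 0 :=
        Finset.sum_tsub_distrib _ (fun k _ => hle k)
      have hle' : (∑ k : Fin n, ∑ p : PhiPos n, if p.1.2 = k then A p + C p else 0)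
          ≤ ∑ k : Fin n, lam k := Finset.sum_le_sum fun k _ => hle k
      rw [h1, hsum, key] at *
      rw [Finset.sum_add_distrib] at *
      omega
    · dsimp only
      rw [Finset.sum_add_distrib, key]
      have hf := f.2
      rw [Fintype.sum_sum_type, Fintype.sum_sum_type] at hf
      rw [Finset.sum_add_distrib]
      omega
    · intro k
      exact Nat.le_add_right _ _
    · rintro ⟨⟨⟨A, C⟩, lam⟩, hsum, hle⟩
      refine Subtype.ext (Prod.ext (Prod.ext rfl rfl) ?_)
      funext k
      exact Nat.add_sub_cancel' (hle k)
    · rintro ⟨f, hf⟩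
      refine Subtype.ext ?_
      funext x
      rcases x with (p | p) | k
      · rfl
      · rfl
      · exact Nat.add_sub_cancel_left _ _
  rw [Nat.card_congr e, card_funSum, Fintype.card_sum, Fintype.card_sum, Fintype.card_fin,
    card_phiPos]
  have h := arith n
  congr 1
  omega
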